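/- The map i : NSymm → (MPR, m', μ') determined by Sₙ ↦ [1,2,...,n] (identity permutation of length n) is an injective morphism of Hopf algebras. -/

import Mathlib

open Finsupp TensorProduct

/-- Standardization of an injective word: each letter is replaced by its rank. -/
def stdz (w : List ℕ) : List ℕ := w.map (fun a => w.countP (fun b => b ≤ a))

/-- The underlying free abelian group of `MPR`. -/
abbrev MPR : Type := List ℕ →₀ ℤ

/-- Second multiplication of `MPR`: `m'(σ⊗τ) = Σ u*v` over all pairs `(u,v)` with
`st(u) = σ`, `st(v) = τ` and `supp(u) ∪ supp(v) = {1,…,m+n}`. -/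
noncomputable def mulMPR' (σ τ : List ℕ) : MPR :=
  (((List.range' 1 (σ.length + τ.length)).permutations.filter
      (fun w => stdz (w.take σ.length) = σ ∧ stdz (w.drop σ.length) = τ)).map
    (fun w => Finsupp.single w (1 : ℤ))).sum

/-- Second comultiplication of `MPR`: `μ'(τ) = Σᵢ τ_{{1..i}} ⊗ st(τ_{{i+1..n}})`. -/
noncomputable def comulMPR' (τ : List ℕ) : MPR ⊗[ℤ] MPR :=
  ((List.range (τ.length + 1)).map (fun i =>
    Finsupp.single (τ.filter (fun a => a ≤ i)) (1 : ℤ) ⊗ₜ[ℤ]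
      Finsupp.single (stdz (τ.filter (fun a => i < a))) (1 : ℤ))).sum

/-- Bilinear extension of `m'` to the free abelian group `MPR`. -/
noncomputable def mulE (x y : MPR) : MPR :=
  x.sum fun σ c => y.sum fun τ d => (c * d) • mulMPR' σ τ

/-- Linear extension of `μ'` to `MPR`. -/
noncomputable def comulE : MPR →ₗ[ℤ] MPR ⊗[ℤ] MPR :=
  Finsupp.lsum ℤ (fun w => LinearMap.toSpanSingleton ℤ (MPR ⊗[ℤ] MPR) (comulMPR' w))

/-- The identity permutation word `[1,2,…,n]`. -/
def idPerm (n : ℕ) : List ℕ := List.range' 1 n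

/-- The image of the monomial `S_α = S_{a₁} ⋯ S_{aₘ}` of `NSymm` in `(MPR, m')`:
the `m'`-product of the identity permutations `[1,…,a₁], …, [1,…,aₘ]`. -/
noncomputable def SImg (α : List ℕ) : MPR :=
  α.foldl (fun acc a => mulE acc (Finsupp.single (idPerm a) 1)) (Finsupp.single [] 1)

/-- All splittings `(β,γ)` with `βᵢ + γᵢ = αᵢ`, encoding the `NSymm` coproduct
`μ(S_α) = Σ S_β ⊗ S_γ` (with `S₀ = 1`). -/
def splittings : List ℕ → List (List ℕ × List ℕ)
  | [] => [([], [])]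
  | a :: α => (List.range (a + 1)).flatMap
      (fun i => (splittings α).map (fun p => (i :: p.1, (a - i) :: p.2)))

-- ### generic list-sum coefficient lemmas

lemma listsum_apply (l : List MPR) (w : List ℕ) :
    l.sum w = (l.map (fun f => f w)).sum := by
  induction l with
  | nil => simp
  | cons a l ih => simp [Finsupp.add_apply, ih]

lemma listsum_single_apply (l : List (List ℕ)) (w : List ℕ) :
    ((l.map (fun v => Finsupp.single v (1:ℤ))).sum) w = l.count w := by
  induction l with
  | nil => simp
  | cons a l ih =>
      simp only [List.map_cons, List.sum_cons, Finsupp.add_apply, ih, List.count_cons]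
      by_cases h : a = w <;> simp [h, Finsupp.single_apply] <;> omega

lemma listsum_single_apply_nodup (l : List (List ℕ)) (hl : l.Nodup) (w : List ℕ) :
    ((l.map (fun v => Finsupp.single v (1:ℤ))).sum) w = if w ∈ l then 1 else 0 := by
  induction l with
  | nil => simp
  | cons a l ih =>
      rcases List.nodup_cons.1 hl with ⟨ha, hl'⟩
      simp only [List.map_cons, List.sum_cons, Finsupp.add_apply, ih hl', List.mem_cons]
      by_cases h : a = w
      · subst h
        simp [ha, Finsupp.single_apply]
      · by_cases h2 : w ∈ l <;> simp [h, h2, Finsupp.single_apply, Ne.symm h]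


lemma list_sum_ite_eq {κ : Type*} [DecidableEq κ] (l : List κ) (hl : l.Nodup) (b : κ)
    (c : κ → ℤ) :
    (l.map (fun x => if x = b then c x else 0)).sum = if b ∈ l then c b else 0 := by
  induction l with
  | nil => simp
  | cons a l ih =>
      simp only [List.map_cons, List.sum_cons, List.mem_cons]
      rcases List.nodup_cons.1 hl with ⟨ha, hl'⟩
      by_cases h : a = b
      · subst h
        simp [ha, ih hl']
      · simp [h, ih hl', Ne.symm h]

-- ### stdz machinery

def fcnt (u : List ℕ) (a : ℕ) : ℕ := u.countP (fun b => b ≤ a)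

lemma stdz_eq_map (u : List ℕ) : stdz u = u.map (fcnt u) := rfl

lemma fcnt_mono (u : List ℕ) {a b : ℕ} (h : a ≤ b) : fcnt u a ≤ fcnt u b :=
  List.countP_mono_left (fun x _ hx => by
    simp only [decide_eq_true_eq] at hx ⊢; omega)

lemma fcnt_strict (u : List ℕ) {a b : ℕ} (h : a < b) (hb : b ∈ u) :
    fcnt u a < fcnt u b := by
  induction u with
  | nil => cases hb
  | cons x u ih =>
      simp only [fcnt, List.countP_cons] at *
      rcases List.mem_cons.1 hb with hbx | hb'
      · subst hbx
        have h1 : ¬ (b ≤ a) := by omega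
        have h2 : List.countP (fun x => decide (x ≤ a)) u ≤
            List.countP (fun x => decide (x ≤ b)) u := fcnt_mono u (le_of_lt h)
        simp [h1]
        omega
      · have := ih hb'
        by_cases hx : x ≤ a
        · have hx' : x ≤ b := le_trans hx (le_of_lt h)
          simp [hx, hx']; omega
        · simp [hx]; omega

lemma fcnt_lt_iff (u : List ℕ) {a b : ℕ} (hb : b ∈ u) :
    fcnt u a < fcnt u b ↔ a < b := by
  constructor
  · intro h
    by_contra hab
    exact absurd (fcnt_mono u (by omega : b ≤ a)) (by omega)
  · exact fun h => fcnt_strict u h hb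

lemma fcnt_injOn (u : List ℕ) {a b : ℕ} (ha : a ∈ u) (hb : b ∈ u)
    (h : fcnt u a = fcnt u b) : a = b := by
  rcases lt_trichotomy a b with h' | h' | h'
  · exact absurd (fcnt_strict u h' hb) (by omega)
  · exact h'
  · exact absurd (fcnt_strict u h' ha) (by omega)

lemma stdz_length (u : List ℕ) : (stdz u).length = u.length := by simp [stdz]

lemma stdz_perm (u : List ℕ) (hu : u.Nodup) : (stdz u).Perm (List.range' 1 u.length) := by
  have hnd : (stdz u).Nodup := by
    rw [stdz_eq_map]
    exact hu.map_on (fun x hx y hy h => fcnt_injOn u hx hy h)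
  have hsub : stdz u ⊆ List.range' 1 u.length := by
    intro m hm
    rw [stdz_eq_map, List.mem_map] at hm
    obtain ⟨a, ha, rfl⟩ := hm
    rw [List.mem_range'_1]
    constructor
    · have : 0 < fcnt u a := by
        rw [fcnt, List.countP_pos_iff]
        exact ⟨a, ha, by simp⟩
      omega
    · have : fcnt u a ≤ u.length := List.countP_le_length
      omega
  exact (List.subperm_of_subset hnd hsub).perm_of_length_le (by simp [stdz_length])

lemma filter_le_range' (s m a : ℕ) :
    (List.range' s m).filter (fun x => x ≤ a) = List.range' s (min (a + 1 - s) m) := by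
  induction m with
  | zero => simp
  | succ m ih =>
      rw [List.range'_concat, List.filter_append, ih]
      by_cases h : s + m ≤ a
      · have h1 : min (a + 1 - s) m = m := by omega
        have h2 : min (a + 1 - s) (m + 1) = m + 1 := by omega
        rw [h1, h2]
        rw [show List.range' s (m+1) = List.range' s m ++ [s+m] by
          simpa using List.range'_concat (step := 1) (s := s) (n := m)]
        simp [h]
      · have h1 : min (a + 1 - s) (m + 1) = min (a + 1 - s) m := by omega
        rw [h1]
        have : ¬ (s + m ≤ a) := h
        simp [this]

lemma fcnt_of_perm_range' {v : List ℕ} {k m : ℕ} (h : v.Perm (List.range' (k+1) m))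
    {a : ℕ} (ha : a ∈ v) : fcnt v a = a - k := by
  have hmem : a ∈ List.range' (k+1) m := h.mem_iff.1 ha
  rw [List.mem_range'_1] at hmem
  rw [fcnt, h.countP_eq]
  rw [show (fun b => decide (b ≤ a)) = (fun b => decide (b ≤ a)) from rfl]
  have := filter_le_range' (k+1) m a
  rw [List.countP_eq_length_filter]
  have hf : (List.range' (k+1) m).filter (fun x => decide (x ≤ a)) =
      List.range' (k+1) (min (a + 1 - (k+1)) m) := filter_le_range' (k+1) m a
  rw [hf, List.length_range']
  omega

lemma stdz_of_perm_range'1 {v : List ℕ} {m : ℕ} (h : v.Perm (List.range' 1 m)) :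
    stdz v = v := by
  rw [stdz_eq_map]
  conv_rhs => rw [← List.map_id v]
  apply List.map_congr_left
  intro a ha
  have := fcnt_of_perm_range' (k := 0) h ha
  simpa using this

lemma stdz_of_perm_range' {v : List ℕ} {k m : ℕ} (h : v.Perm (List.range' (k+1) m)) :
    stdz v = v.map (fun a => a - k) := by
  rw [stdz_eq_map]
  apply List.map_congr_left
  intro a ha
  exact fcnt_of_perm_range' h ha

-- ### blocksB

def blocksB : List ℕ → List ℕ → Prop
  | [] => fun _ => True
  | a :: α => fun w => (w.take a).Pairwise (· < ·) ∧ blocksB α (w.drop a)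

instance blocksBDec : ∀ (α w : List ℕ), Decidable (blocksB α w)
  | [], _ => .isTrue trivial
  | a :: α, w => @instDecidableAnd _ _ inferInstance (blocksBDec α (w.drop a))

@[simp] lemma blocksB_nil (w : List ℕ) : blocksB [] w ↔ True := Iff.rfl

lemma blocksB_cons (a : ℕ) (α : List ℕ) (w : List ℕ) :
    blocksB (a :: α) w ↔ (w.take a).Pairwise (· < ·) ∧ blocksB α (w.drop a) := Iff.rfl

lemma blocksB_append (α β w : List ℕ) :
    blocksB (α ++ β) w ↔ blocksB α (w.take α.sum) ∧ blocksB β (w.drop α.sum) := by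
  induction α generalizing w with
  | nil => simp
  | cons a α ih =>
      simp only [List.cons_append, blocksB_cons, ih, List.sum_cons]
      rw [List.take_take, min_eq_left (Nat.le_add_right a α.sum), List.drop_take,
        Nat.add_sub_cancel_left, List.drop_drop]
      tauto

lemma sorted_map_iff (f : ℕ → ℕ) (u l : List ℕ) (hl : l ⊆ u)
    (hf : ∀ a ∈ u, ∀ b ∈ u, (f a < f b ↔ a < b)) :
    (l.map f).Pairwise (· < ·) ↔ l.Pairwise (· < ·) := by
  rw [List.pairwise_map]
  exact List.Pairwise.iff_of_mem (fun {x y} hx hy => hf x (hl hx) y (hl hy))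

lemma blocksB_map_iff (f : ℕ → ℕ) (u : List ℕ)
    (hf : ∀ a ∈ u, ∀ b ∈ u, (f a < f b ↔ a < b)) (α : List ℕ) :
    blocksB α (u.map f) ↔ blocksB α u := by
  induction α generalizing u with
  | nil => simp
  | cons a α ih =>
      simp only [blocksB_cons, ← List.map_take, ← List.map_drop]
      rw [sorted_map_iff f u _ (fun x hx => (List.take_sublist a u).mem hx) hf,
        ih (u.drop a) (fun x hx y hy => hf x ((List.drop_sublist a u).mem hx)
          y ((List.drop_sublist a u).mem hy))]

-- ### Lw / SImg'

def Lw (α : List ℕ) : List (List ℕ) :=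
  (List.range' 1 α.sum).permutations.filter (fun w => decide (blocksB α w))

noncomputable def SImg' (α : List ℕ) : MPR :=
  ((Lw α).map (fun w => Finsupp.single w (1:ℤ))).sum

lemma nodup_Lw (α : List ℕ) : (Lw α).Nodup :=
  (List.nodup_permutations _ (List.nodup_range' (s := 1) (n := α.sum))).filter _

lemma mem_Lw {α w : List ℕ} : w ∈ Lw α ↔ w.Perm (List.range' 1 α.sum) ∧ blocksB α w := by
  simp [Lw, List.mem_filter, List.mem_permutations]

lemma SImg'_apply (α : List ℕ) (w : List ℕ) :
    SImg' α w = if w ∈ Lw α then 1 else 0 :=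
  listsum_single_apply_nodup _ (nodup_Lw α) w

lemma length_of_mem_Lw {α w : List ℕ} (h : w ∈ Lw α) : w.length = α.sum := by
  rw [(mem_Lw.1 h).1.length_eq, List.length_range']

-- ### mulE basic lemmas

lemma mulE_zero_left (y : MPR) : mulE 0 y = 0 := by
  simp [mulE]

lemma mulE_add_left (x x' y : MPR) : mulE (x + x') y = mulE x y + mulE x' y := by
  unfold mulE
  apply Finsupp.sum_add_index'
  · intro σ
    simp
  · intro σ c c'
    rw [← Finsupp.sum_add]
    congr 1
    ext τ d
    rw [add_mul, add_smul]

lemma mulE_zero_right (x : MPR) : mulE x 0 = 0 := by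
  simp [mulE]

lemma mulE_add_right (x y y' : MPR) : mulE x (y + y') = mulE x y + mulE x y' := by
  unfold mulE
  rw [← Finsupp.sum_add]
  congr 1
  funext σ c
  apply Finsupp.sum_add_index'
  · intro τ; simp
  · intro τ d d'
    rw [mul_add, add_smul]

lemma mulE_single_single (σ τ : List ℕ) :
    mulE (Finsupp.single σ (1:ℤ)) (Finsupp.single τ (1:ℤ)) = mulMPR' σ τ := by
  unfold mulE
  rw [Finsupp.sum_single_index, Finsupp.sum_single_index] <;> simp

lemma mulE_sum_left (l : List (List ℕ)) (g : List ℕ → MPR) (y : MPR) :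
    mulE ((l.map g).sum) y = (l.map (fun v => mulE (g v) y)).sum := by
  induction l with
  | nil => simp [mulE_zero_left]
  | cons a l ih => simp [mulE_add_left, ih]

lemma mulE_sum_right (x : MPR) (l : List (List ℕ)) (g : List ℕ → MPR) :
    mulE x ((l.map g).sum) = (l.map (fun v => mulE x (g v))).sum := by
  induction l with
  | nil => simp [mulE_zero_right]
  | cons a l ih => simp [mulE_add_right, ih]

lemma mulMPR'_apply (σ τ w : List ℕ) :
    (mulMPR' σ τ) w = if (w.Perm (List.range' 1 (σ.length + τ.length)) ∧
      stdz (w.take σ.length) = σ ∧ stdz (w.drop σ.length) = τ) then 1 else 0 := by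
  unfold mulMPR'
  rw [listsum_single_apply_nodup _ ((List.nodup_permutations _ (List.nodup_range' (s := 1))).filter _)]
  congr 1
  simp [List.mem_filter, List.mem_permutations]

-- ### core product lemma

lemma nodup_of_perm_range' {w : List ℕ} {s n : ℕ} (h : w.Perm (List.range' s n)) :
    w.Nodup := h.nodup_iff.2 (List.nodup_range' (s := s) (n := n))

instance : IsAntisymm ℕ (· < ·) := ⟨fun _ _ h h' => absurd h (lt_asymm h')⟩

lemma SImg'_mulE (α β : List ℕ) : mulE (SImg' α) (SImg' β) = SImg' (α ++ β) := by
  ext w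
  have key : ∀ v ∈ Lw α, mulE (Finsupp.single v (1:ℤ)) (SImg' β) w =
      if (w.Perm (List.range' 1 (α.sum + β.sum)) ∧ stdz (w.take α.sum) = v ∧
        stdz (w.drop α.sum) ∈ Lw β) then 1 else 0 := by
    intro v hv
    rw [SImg', mulE_sum_right, listsum_apply, List.map_map]
    have step : ((Lw β).map ((fun f : MPR => f w) ∘ ((fun v' => mulE (Finsupp.single v 1)
        (Finsupp.single v' 1))))).sum =
        ((Lw β).map (fun v' => if v' = stdz (w.drop α.sum) then
          (if (w.Perm (List.range' 1 (α.sum + β.sum)) ∧ stdz (w.take α.sum) = v)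
            then (1:ℤ) else 0) else 0)).sum := by
      apply congrArg List.sum
      apply List.map_congr_left
      intro v' hv'
      simp only [Function.comp_apply]
      rw [mulE_single_single, mulMPR'_apply, length_of_mem_Lw hv, length_of_mem_Lw hv']
      by_cases h1 : v' = stdz (w.drop α.sum)
      · subst h1
        by_cases h2 : w.Perm (List.range' 1 (α.sum + β.sum)) ∧ stdz (w.take α.sum) = v <;>
          simp [h2] <;> tauto
      · have : ¬ (stdz (w.drop α.sum) = v') := fun h => h1 h.symm
        simp [h1, this]
    rw [step, list_sum_ite_eq _ (nodup_Lw β) _ _]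
    by_cases h3 : stdz (w.drop α.sum) ∈ Lw β <;>
      by_cases h4 : w.Perm (List.range' 1 (α.sum + β.sum)) ∧ stdz (w.take α.sum) = v <;>
      simp [h3, h4] <;> tauto
  rw [SImg', mulE_sum_left, listsum_apply, List.map_map]
  have step2 : ((Lw α).map ((fun f : MPR => f w) ∘ (fun v => mulE (Finsupp.single v 1)
      (SImg' β)))).sum =
      ((Lw α).map (fun v => if v = stdz (w.take α.sum) then
        (if (w.Perm (List.range' 1 (α.sum + β.sum)) ∧ stdz (w.drop α.sum) ∈ Lw β)
          then (1:ℤ) else 0) else 0)).sum := by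
    apply congrArg List.sum
    apply List.map_congr_left
    intro v hv
    simp only [Function.comp_apply]
    rw [key v hv]
    by_cases h1 : v = stdz (w.take α.sum)
    · subst h1
      by_cases h2 : w.Perm (List.range' 1 (α.sum + β.sum)) ∧ stdz (w.drop α.sum) ∈ Lw β <;>
        simp [h2] <;> tauto
    · have : ¬ (stdz (w.take α.sum) = v) := fun h => h1 h.symm
      simp [h1, this]
  rw [step2, list_sum_ite_eq _ (nodup_Lw α) _ _, SImg'_apply]
  have main : ((stdz (w.take α.sum) ∈ Lw α) ∧ (w.Perm (List.range' 1 (α.sum + β.sum)) ∧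
      stdz (w.drop α.sum) ∈ Lw β)) ↔ w ∈ Lw (α ++ β) := by
    rw [mem_Lw, mem_Lw, mem_Lw, List.sum_append, blocksB_append]
    constructor
    · rintro ⟨⟨hp1, hb1⟩, hP, hp2, hb2⟩
      have hw : w.Nodup := nodup_of_perm_range' hP
      have hwl : w.length = α.sum + β.sum := by rw [hP.length_eq, List.length_range']
      have htk : (w.take α.sum).Nodup := (List.take_sublist _ _).nodup hw
      have hdr : (w.drop α.sum).Nodup := (List.drop_sublist _ _).nodup hw
      refine ⟨hP, ?_, ?_⟩
      · rw [stdz_eq_map, blocksB_map_iff (fcnt (w.take α.sum)) _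
          (fun a _ b hb => fcnt_lt_iff _ hb)] at hb1
        exact hb1
      · rw [stdz_eq_map, blocksB_map_iff (fcnt (w.drop α.sum)) _
          (fun a _ b hb => fcnt_lt_iff _ hb)] at hb2
        exact hb2
    · rintro ⟨hP, hb1, hb2⟩
      have hw : w.Nodup := nodup_of_perm_range' hP
      have hwl : w.length = α.sum + β.sum := by rw [hP.length_eq, List.length_range']
      have htk : (w.take α.sum).Nodup := (List.take_sublist _ _).nodup hw
      have hdr : (w.drop α.sum).Nodup := (List.drop_sublist _ _).nodup hw
      refine ⟨⟨?_, ?_⟩, hP, ?_, ?_⟩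
      · have := stdz_perm _ htk
        rwa [List.length_take, min_eq_left (by omega)] at this
      · rw [stdz_eq_map, blocksB_map_iff (fcnt (w.take α.sum)) _
          (fun a _ b hb => fcnt_lt_iff _ hb)]
        exact hb1
      · have := stdz_perm _ hdr
        rwa [List.length_drop, hwl, Nat.add_sub_cancel_left] at this
      · rw [stdz_eq_map, blocksB_map_iff (fcnt (w.drop α.sum)) _
          (fun a _ b hb => fcnt_lt_iff _ hb)]
        exact hb2
  have hm := main
  by_cases h1 : stdz (List.take α.sum w) ∈ Lw α <;>
    by_cases h2 : w.Perm (List.range' 1 (α.sum + β.sum)) ∧ stdz (List.drop α.sum w) ∈ Lw β <;>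
    by_cases h3 : w ∈ Lw (α ++ β) <;>
    simp [h1, h2, h3] at hm ⊢ <;> tauto

lemma SImg'_nil : SImg' [] = Finsupp.single [] (1:ℤ) := by
  have : Lw [] = [[]] := by
    simp [Lw]
  rw [SImg', this]
  simp

lemma SImg'_single (a : ℕ) : SImg' [a] = Finsupp.single (idPerm a) (1:ℤ) := by
  ext w
  rw [SImg'_apply, Finsupp.single_apply]
  have : (w ∈ Lw [a]) ↔ (idPerm a = w) := by
    rw [mem_Lw]
    constructor
    · rintro ⟨hp, hb, -⟩
      have hwl : w.length = a := by
        rw [hp.length_eq, List.length_range']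
        simp
      rw [← hwl] at hb
      rw [List.take_length] at hb
      have : w = List.range' 1 ([a].sum) := by
        apply List.Perm.eq_of_pairwise (fun _ _ _ _ h h' => absurd h (lt_asymm h')) hb ?_ hp
        exact List.pairwise_lt_range'
      simp only [List.sum_cons, List.sum_nil, Nat.add_zero] at this
      rw [this, idPerm]
    · rintro rfl
      have h1 : List.range' 1 ([a].sum) = idPerm a := by simp [idPerm]
      refine ⟨by rw [h1], ?_, trivial⟩
      apply List.Pairwise.sublist (List.take_sublist _ _)
      exact List.pairwise_lt_range'
  by_cases h : w ∈ Lw [a]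
  · rw [if_pos h, if_pos (this.1 h)]
  · rw [if_neg h, if_neg (fun hc => h (this.2 hc))]

lemma SImg_eq_SImg' (α : List ℕ) : SImg α = SImg' α := by
  induction α using List.reverseRecOn with
  | nil => rw [show SImg [] = Finsupp.single [] 1 from rfl, SImg'_nil]
  | append_singleton α a ih =>
      have : SImg (α ++ [a]) = mulE (SImg α) (Finsupp.single (idPerm a) 1) := by
        rw [SImg, List.foldl_append]
        rfl
      rw [this, ih, ← SImg'_single, SImg'_mulE]

lemma part1 (α β : List ℕ) : SImg (α ++ β) = mulE (SImg α) (SImg β) := by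
  rw [SImg_eq_SImg', SImg_eq_SImg', SImg_eq_SImg', SImg'_mulE]
-- ### generic pair-finsupp coefficient lemmas

lemma listsum_apply2 {κ : Type*} (l : List (κ →₀ ℤ)) (w : κ) :
    l.sum w = (l.map (fun f => f w)).sum := by
  induction l with
  | nil => simp
  | cons a l ih => simp [Finsupp.add_apply, ih]

-- ### splittings facts

lemma mem_splittings_cons {a : ℕ} {α : List ℕ} {p : List ℕ × List ℕ} :
    p ∈ splittings (a :: α) ↔
      ∃ k ≤ a, ∃ q ∈ splittings α, p = (k :: q.1, (a - k) :: q.2) := by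
  simp only [splittings, List.mem_flatMap, List.mem_range, List.mem_map, Nat.lt_succ_iff]
  constructor
  · rintro ⟨k, hk, q, hq, rfl⟩
    exact ⟨k, hk, q, hq, rfl⟩
  · rintro ⟨k, hk, q, hq, rfl⟩
    exact ⟨k, hk, q, hq, rfl⟩

lemma splittings_lengths {α : List ℕ} {p : List ℕ × List ℕ} (h : p ∈ splittings α) :
    p.1.length = α.length ∧ p.2.length = α.length := by
  induction α generalizing p with
  | nil => simp [splittings] at h; simp [h]
  | cons a α ih =>
      rw [mem_splittings_cons] at h
      obtain ⟨k, hk, q, hq, rfl⟩ := h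
      have := ih hq
      simp [this]

lemma splittings_sum {α : List ℕ} {p : List ℕ × List ℕ} (h : p ∈ splittings α) :
    p.1.sum + p.2.sum = α.sum := by
  induction α generalizing p with
  | nil => simp [splittings] at h; simp [h]
  | cons a α ih =>
      rw [mem_splittings_cons] at h
      obtain ⟨k, hk, q, hq, rfl⟩ := h
      have := ih hq
      simp only [List.sum_cons]
      omega

lemma nodup_splittings (α : List ℕ) : (splittings α).Nodup := by
  induction α with
  | nil => simp [splittings]
  | cons a α ih =>
      rw [splittings, List.nodup_flatMap]
      constructor
      · intro i _
        exact ih.map (fun p q h => by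
          simp only [Prod.mk.injEq, List.cons.injEq] at h
          exact Prod.ext h.1.2 h.2.2)
      · apply List.Pairwise.imp ?_ (List.nodup_range (n := a+1))
        intro i j hij
        intro x hx hy
        simp only [List.mem_map] at hx hy
        obtain ⟨p, _, rfl⟩ := hx
        obtain ⟨q, _, h2⟩ := hy
        simp only [Prod.mk.injEq, List.cons.injEq] at h2
        exact hij h2.1.1.symm

-- ### cnt / itl

def cnt (p : ℕ → Bool) : List ℕ → List ℕ → List ℕ
  | [], _ => []
  | a :: α, w => (w.take a).countP p :: cnt p α (w.drop a)

def itl : List ℕ → List ℕ → List ℕ → List ℕ → List ℕ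
  | b :: β, c :: γ, u, v => u.take b ++ v.take c ++ itl β γ (u.drop b) (v.drop c)
  | _, _, _, _ => []

lemma cnt_sum (p : ℕ → Bool) (α w : List ℕ) (h : w.length = α.sum) :
    (cnt p α w).sum = w.countP p := by
  induction α generalizing w with
  | nil => simp at h; simp [cnt, h]
  | cons a α ih =>
      simp only [List.sum_cons] at h
      simp only [cnt, List.sum_cons]
      rw [ih _ (by rw [List.length_drop]; omega)]
      conv_rhs => rw [← List.take_append_drop a w]
      rw [List.countP_append]

lemma filter_gt_range' (s m i : ℕ) :
    (List.range' s m).filter (fun x => i < x) = List.range' (max s (i+1)) (s + m - max s (i+1)) := by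
  induction m with
  | zero => simp
  | succ m ih =>
      rw [show List.range' s (m+1) = List.range' s m ++ [s+m] by
        simpa using List.range'_concat (step := 1) (s := s) (n := m)]
      rw [List.filter_append, ih]
      by_cases h : i < s + m
      · have : (List.filter (fun x => decide (i < x)) [s + m]) = [s+m] := by simp [h]
        rw [this, show s + (m+1) - max s (i+1) = (s + m - max s (i+1)) + 1 by omega,
          List.range'_concat (step := 1)]
        simp only [one_mul]
        congr 1
        simp only [List.cons.injEq, and_true]
        omega
      · have : (List.filter (fun x => decide (i < x)) [s + m]) = [] := by
          simp; omega
        rw [this, List.append_nil]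
        congr 1
        omega
-- ### sorted split

lemma sorted_split (p : ℕ → Bool) (hdc : ∀ x y : ℕ, x < y → p y = true → p x = true) :
    ∀ {B : List ℕ}, B.Pairwise (· < ·) →
      B = B.filter p ++ B.filter (fun b => ! p b) := by
  intro B
  induction B with
  | nil => simp
  | cons x B ih =>
      intro hs
      rcases List.pairwise_cons.1 hs with ⟨hx, hs'⟩
      by_cases hp : p x = true
      · simp only [List.filter_cons, hp]
        simpa using ih hs'
      · have hall : ∀ y ∈ B, p y = false := by
          intro y hy
          by_contra hc
          exact hp (hdc x y (hx y hy) (by revert hc; cases p y <;> simp))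
        have h1 : B.filter p = [] := List.filter_eq_nil_iff.2 (by
          intro a ha; rw [hall a ha]; simp)
        have h2 : (x :: B).filter p = [] := by
          simp only [List.filter_cons, hp]
          simpa using h1
        have h3 : (x :: B).filter (fun b => ! p b) = x :: B := List.filter_eq_self.2 (by
          intro a ha
          rcases List.mem_cons.1 ha with rfl | ha'
          · simpa using hp
          · simp [hall a ha'])
        rw [h2, h3]
        simp

-- ### blocksB of cnt

lemma blocksB_cnt (p : ℕ → Bool) : ∀ (α w : List ℕ), blocksB α w →
    blocksB (cnt p α w) (w.filter p)
  | [], w, _ => trivial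
  | a :: α, w, hb => by
      rcases (blocksB_cons a α w).1 hb with ⟨hs, hb'⟩
      rw [cnt, blocksB_cons]
      have hw : w.filter p = (w.take a).filter p ++ (w.drop a).filter p := by
        conv_lhs => rw [← List.take_append_drop a w]
        rw [List.filter_append]
      have hlen : ((w.take a).filter p).length = (w.take a).countP p :=
        (List.countP_eq_length_filter (p := p)).symm
      constructor
      · rw [hw, List.take_left' hlen]
        exact List.Pairwise.sublist (List.filter_sublist) hs
      · rw [hw, List.drop_left' hlen]
        exact blocksB_cnt p α (w.drop a) hb'

lemma mem_splittings_cnt (i : ℕ) : ∀ (α w : List ℕ), w.length = α.sum →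
    (cnt (fun b => b ≤ i) α w, cnt (fun b => i < b) α w) ∈ splittings α
  | [], w, h => by simp [cnt, splittings]
  | a :: α, w, h => by
      simp only [List.sum_cons] at h
      rw [mem_splittings_cons]
      have hta : (w.take a).length = a := by
        rw [List.length_take]; omega
      refine ⟨(w.take a).countP (fun b => b ≤ i), ?_, (cnt (fun b => b ≤ i) α (w.drop a),
        cnt (fun b => i < b) α (w.drop a)), mem_splittings_cnt i α (w.drop a)
          (by rw [List.length_drop]; omega), ?_⟩
      · exact le_trans (List.countP_le_length) (le_of_eq hta)
      · have hsplit := List.length_eq_countP_add_countP (fun b => decide (b ≤ i)) (l := w.take a)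
        have hcongr : List.countP (fun a => decide ¬(fun b => decide (b ≤ i)) a = true) (w.take a)
            = List.countP (fun b => decide (i < b)) (w.take a) := by
          apply List.countP_congr
          intro x _
          by_cases hx : x ≤ i <;> simp [hx] <;> omega
        rw [hcongr] at hsplit
        rw [hta] at hsplit
        rw [cnt, cnt]
        simp only [Prod.mk.injEq, List.cons.injEq, true_and, and_true]
        omega

-- ### itl lemmas

lemma itl_perm : ∀ (β γ u v : List ℕ), β.length = γ.length → u.length = β.sum →
    v.length = γ.sum → (itl β γ u v).Perm (u ++ v)
  | [], [], u, v, _, hu, hv => by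
      simp at hu hv
      simp [itl, hu, hv]
  | [], c :: γ, _, _, h, _, _ => by simp at h
  | b :: β, [], _, _, h, _, _ => by simp at h
  | b :: β, c :: γ, u, v, h, hu, hv => by
      simp only [List.length_cons, List.sum_cons] at h hu hv
      have ih := itl_perm β γ (u.drop b) (v.drop c) (by omega)
        (by rw [List.length_drop]; omega) (by rw [List.length_drop]; omega)
      have h0 : itl (b :: β) (c :: γ) u v
          = (u.take b ++ v.take c) ++ itl β γ (u.drop b) (v.drop c) := by
        rw [itl, List.append_assoc]
      rw [h0]
      refine (ih.append_left _).trans ?_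
      apply List.perm_iff_count.2
      intro x
      conv_rhs => rw [← List.take_append_drop b u, ← List.take_append_drop c v]
      simp only [List.count_append]
      ring

lemma itl_blocks : ∀ (α β γ u v : List ℕ), ((β, γ) ∈ splittings α) →
    u.length = β.sum → v.length = γ.sum → blocksB β u → blocksB γ v →
    (∀ x ∈ u, ∀ y ∈ v, x < y) → blocksB α (itl β γ u v)
  | [], β, γ, u, v, hm, _, _, _, _, _ => trivial
  | a :: α, β, γ, u, v, hm, hu, hv, hbu, hbv, hxy => by
      rw [mem_splittings_cons] at hm
      obtain ⟨k, hk, q, hq, heq⟩ := hm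
      injection heq with h1 h2
      subst h1; subst h2
      simp only [List.sum_cons] at hu hv
      have hku : (u.take k).length = k := by rw [List.length_take]; omega
      have hkv : (v.take (a-k)).length = a - k := by rw [List.length_take]; omega
      have hitl : itl (k :: q.1) ((a-k) :: q.2) u v
          = (u.take k ++ v.take (a-k)) ++ itl q.1 q.2 (u.drop k) (v.drop (a-k)) := by
        rw [itl, List.append_assoc]
      rw [blocksB_cons]
      constructor
      · rw [hitl, List.take_left' (by rw [List.length_append, hku, hkv]; omega)]
        rw [List.pairwise_append]
        rcases (blocksB_cons k q.1 u).1 hbu with ⟨hsu, _⟩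
        rcases (blocksB_cons (a-k) q.2 v).1 hbv with ⟨hsv, _⟩
        exact ⟨hsu, hsv, fun x hx y hy => hxy x ((List.take_sublist _ _).mem hx)
          y ((List.take_sublist _ _).mem hy)⟩
      · rw [hitl, List.drop_left' (by rw [List.length_append, hku, hkv]; omega)]
        exact itl_blocks α q.1 q.2 (u.drop k) (v.drop (a-k)) hq
          (by rw [List.length_drop]; omega) (by rw [List.length_drop]; omega)
          ((blocksB_cons k q.1 u).1 hbu).2 ((blocksB_cons (a-k) q.2 v).1 hbv).2
          (fun x hx y hy => hxy x ((List.drop_sublist _ _).mem hx)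
            y ((List.drop_sublist _ _).mem hy))

lemma itl_filter (p : ℕ → Bool) : ∀ (β γ u v : List ℕ), β.length = γ.length →
    u.length = β.sum → v.length = γ.sum → (∀ x ∈ u, p x = true) →
    (∀ y ∈ v, p y = false) → (itl β γ u v).filter p = u
  | [], [], u, v, _, hu, _, _, _ => by
      simp at hu
      simp [itl, hu]
  | [], c :: γ, _, _, h, _, _, _, _ => by simp at h
  | b :: β, [], _, _, h, _, _, _, _ => by simp at h
  | b :: β, c :: γ, u, v, h, hu, hv, hpu, hpv => by
      simp only [List.length_cons, List.sum_cons] at h hu hv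
      rw [itl, List.filter_append, List.filter_append]
      rw [List.filter_eq_self.2 (fun a ha => hpu a ((List.take_sublist b u).mem ha))]
      rw [List.filter_eq_nil_iff.2 (fun a ha hc =>
        by rw [hpv a ((List.take_sublist c v).mem ha)] at hc; exact Bool.noConfusion hc)]
      rw [itl_filter p β γ (u.drop b) (v.drop c) (by omega)
        (by rw [List.length_drop]; omega) (by rw [List.length_drop]; omega)
        (fun a ha => hpu a ((List.drop_sublist b u).mem ha))
        (fun a ha => hpv a ((List.drop_sublist c v).mem ha))]
      rw [List.append_nil, List.take_append_drop]

lemma itl_filter' (p : ℕ → Bool) : ∀ (β γ u v : List ℕ), β.length = γ.length →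
    u.length = β.sum → v.length = γ.sum → (∀ x ∈ u, p x = false) →
    (∀ y ∈ v, p y = true) → (itl β γ u v).filter p = v
  | [], [], u, v, _, _, hv, _, _ => by
      simp at hv
      simp [itl, hv]
  | [], c :: γ, _, _, h, _, _, _, _ => by simp at h
  | b :: β, [], _, _, h, _, _, _, _ => by simp at h
  | b :: β, c :: γ, u, v, h, hu, hv, hpu, hpv => by
      simp only [List.length_cons, List.sum_cons] at h hu hv
      rw [itl, List.filter_append, List.filter_append]
      rw [List.filter_eq_self.2 (fun a ha => hpv a ((List.take_sublist c v).mem ha))]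
      rw [List.filter_eq_nil_iff.2 (fun a ha hc =>
        by rw [hpu a ((List.take_sublist b u).mem ha)] at hc; exact Bool.noConfusion hc)]
      rw [itl_filter' p β γ (u.drop b) (v.drop c) (by omega)
        (by rw [List.length_drop]; omega) (by rw [List.length_drop]; omega)
        (fun a ha => hpu a ((List.drop_sublist b u).mem ha))
        (fun a ha => hpv a ((List.drop_sublist c v).mem ha))]
      rw [List.nil_append, List.take_append_drop]
-- ### inverse lemmas

lemma itl_cnt (p : ℕ → Bool) (hdc : ∀ x y : ℕ, x < y → p y = true → p x = true) :
    ∀ (α w : List ℕ), blocksB α w → w.length = α.sum →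
      itl (cnt p α w) (cnt (fun b => ! p b) α w)
        (w.filter p) (w.filter (fun b => ! p b)) = w
  | [], w, _, h => by
      simp at h
      simp [cnt, itl, h]
  | a :: α, w, hb, h => by
      simp only [List.sum_cons] at h
      rcases (blocksB_cons a α w).1 hb with ⟨hs, hb'⟩
      have hfB : w.filter p = (w.take a).filter p ++ (w.drop a).filter p := by
        conv_lhs => rw [← List.take_append_drop a w]
        rw [List.filter_append]
      have hfB' : w.filter (fun b => ! p b) =
          (w.take a).filter (fun b => ! p b) ++ (w.drop a).filter (fun b => ! p b) := by
        conv_lhs => rw [← List.take_append_drop a w]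
        rw [List.filter_append]
      rw [cnt, cnt, itl, hfB, hfB',
        List.take_left' (List.countP_eq_length_filter (p := p)).symm,
        List.drop_left' (List.countP_eq_length_filter (p := p)).symm,
        List.take_left' (List.countP_eq_length_filter).symm,
        List.drop_left' (List.countP_eq_length_filter).symm,
        ← sorted_split p hdc hs,
        itl_cnt p hdc α (w.drop a) hb' (by rw [List.length_drop]; omega),
        List.take_append_drop]

lemma cnt_itl (p : ℕ → Bool) : ∀ (α β γ u v : List ℕ), ((β, γ) ∈ splittings α) →
    u.length = β.sum → v.length = γ.sum → (∀ x ∈ u, p x = true) →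
    (∀ y ∈ v, p y = false) →
    cnt p α (itl β γ u v) = β ∧ cnt (fun b => ! p b) α (itl β γ u v) = γ
  | [], β, γ, u, v, hm, _, _, _, _ => by
      simp [splittings] at hm
      simp [cnt, hm.1, hm.2]
  | a :: α, β, γ, u, v, hm, hu, hv, hpu, hpv => by
      rw [mem_splittings_cons] at hm
      obtain ⟨k, hk, q, hq, heq⟩ := hm
      injection heq with h1 h2
      subst h1; subst h2
      simp only [List.sum_cons] at hu hv
      have hXl : (u.take k).length = k := by rw [List.length_take]; omega
      have hYl : (v.take (a-k)).length = a - k := by rw [List.length_take]; omega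
      have hitl : itl (k :: q.1) ((a-k) :: q.2) u v
          = (u.take k ++ v.take (a-k)) ++ itl q.1 q.2 (u.drop k) (v.drop (a-k)) := by
        rw [itl, List.append_assoc]
      have hlen : (u.take k ++ v.take (a-k)).length = a := by
        rw [List.length_append, hXl, hYl]; omega
      have hcp : (u.take k ++ v.take (a-k)).countP p = k := by
        rw [List.countP_append,
          List.countP_eq_length.2 (fun x hx => hpu x ((List.take_sublist _ _).mem hx)),
          List.countP_eq_zero.2 (fun y hy hc => by
            rw [hpv y ((List.take_sublist _ _).mem hy)] at hc; exact Bool.noConfusion hc),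
          hXl]
        omega
      have hcp' : (u.take k ++ v.take (a-k)).countP (fun b => ! p b) = a - k := by
        rw [List.countP_append,
          List.countP_eq_zero.2 (fun x hx hc => by
            rw [hpu x ((List.take_sublist _ _).mem hx)] at hc; simp at hc),
          List.countP_eq_length.2 (fun y hy => by
            rw [hpv y ((List.take_sublist _ _).mem hy)]; rfl),
          hYl]
        omega
      have IH := cnt_itl p α q.1 q.2 (u.drop k) (v.drop (a-k)) hq
        (by rw [List.length_drop]; omega) (by rw [List.length_drop]; omega)
        (fun x hx => hpu x ((List.drop_sublist _ _).mem hx))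
        (fun y hy => hpv y ((List.drop_sublist _ _).mem hy))
      constructor
      · rw [cnt, hitl, List.take_left' hlen, List.drop_left' hlen, hcp, IH.1]
      · rw [cnt, hitl, List.take_left' hlen, List.drop_left' hlen, hcp', IH.2]

-- ### assembly: forward direction facts

lemma F_side {α w : List ℕ} {i : ℕ} (hw : w.Perm (List.range' 1 α.sum)) (hb : blocksB α w)
    (hi : i ≤ α.sum) :
    ((cnt (fun b => b ≤ i) α w, cnt (fun b => i < b) α w) ∈ splittings α) ∧
    (w.filter (fun a => a ≤ i)) ∈ Lw (cnt (fun b => b ≤ i) α w) ∧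
    (stdz (w.filter (fun a => i < a))) ∈ Lw (cnt (fun b => i < b) α w) := by
  have hn : w.length = α.sum := by rw [hw.length_eq, List.length_range']
  refine ⟨mem_splittings_cnt i α w hn, ?_, ?_⟩
  · rw [mem_Lw]
    constructor
    · have h1 := hw.filter (fun a => decide (a ≤ i))
      rw [filter_le_range'] at h1
      have h2 : (cnt (fun b => b ≤ i) α w).sum = w.countP (fun b => b ≤ i) :=
        cnt_sum _ _ _ hn
      have h3 : w.countP (fun b => decide (b ≤ i)) = min i α.sum := by
        rw [hw.countP_eq, List.countP_eq_length_filter, filter_le_range',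
          List.length_range']
        omega
      rw [h2, h3, min_eq_left hi]
      have h4 : min (i + 1 - 1) α.sum = i := by omega
      rwa [h4] at h1
    · exact blocksB_cnt _ α w hb
  · rw [mem_Lw]
    have hxnd : (w.filter (fun a => decide (i < a))).Nodup :=
      (List.filter_sublist (l := w)).nodup (nodup_of_perm_range' hw)
    constructor
    · have hp := stdz_perm _ hxnd
      have hxl : (w.filter (fun a => decide (i < a))).length =
          (cnt (fun b => i < b) α w).sum := by
        rw [cnt_sum _ _ _ hn, ← List.countP_eq_length_filter]
      rwa [hxl] at hp
    · rw [stdz_eq_map, blocksB_map_iff _ _ (fun a _ b hb' => fcnt_lt_iff _ hb')]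
      exact blocksB_cnt _ α w hb

-- ### assembly: backward direction facts

lemma G_side {α β γ u v : List ℕ} (hm : (β, γ) ∈ splittings α) (hu : u ∈ Lw β)
    (hv : v ∈ Lw γ) :
    (itl β γ u (v.map (· + β.sum))) ∈ Lw α ∧ β.sum ≤ α.sum ∧
    ((itl β γ u (v.map (· + β.sum))).filter (fun a => a ≤ β.sum)) = u ∧
    stdz ((itl β γ u (v.map (· + β.sum))).filter (fun a => β.sum < a)) = v := by
  set v' := v.map (· + β.sum) with hv'def
  rcases mem_Lw.1 hu with ⟨hup, hub⟩
  rcases mem_Lw.1 hv with ⟨hvp, hvb⟩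
  have hul : u.length = β.sum := by rw [hup.length_eq, List.length_range']
  have hvl : v.length = γ.sum := by rw [hvp.length_eq, List.length_range']
  have hv'l : v'.length = γ.sum := by rw [hv'def, List.length_map, hvl]
  have hlen : β.length = γ.length := by
    obtain ⟨h1, h2⟩ := splittings_lengths hm
    simp only at h1 h2
    omega
  have hsum : β.sum + γ.sum = α.sum := splittings_sum hm
  have humem : ∀ x ∈ u, 1 ≤ x ∧ x ≤ β.sum := by
    intro x hx
    have := hup.mem_iff.1 hx
    rw [List.mem_range'_1] at this
    omega
  have hv'mem : ∀ y ∈ v', β.sum + 1 ≤ y ∧ y ≤ α.sum := by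
    intro y hy
    rw [hv'def, List.mem_map] at hy
    obtain ⟨z, hz, rfl⟩ := hy
    have := hvp.mem_iff.1 hz
    rw [List.mem_range'_1] at this
    show β.sum + 1 ≤ z + β.sum ∧ z + β.sum ≤ α.sum
    omega
  have hv'perm : v'.Perm (List.range' (β.sum + 1) γ.sum) := by
    have h1 : v'.Perm ((List.range' 1 γ.sum).map (· + β.sum)) := hvp.map _
    have h2 : (List.range' 1 γ.sum).map (· + β.sum) = List.range' (1 + β.sum) γ.sum := by
      rw [show ((· + β.sum) : ℕ → ℕ) = (fun x => β.sum + x) from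
        funext fun x => Nat.add_comm x β.sum, List.map_add_range']
      rw [Nat.add_comm β.sum 1]
    rw [h2, Nat.add_comm 1 β.sum] at h1
    exact h1
  have hv'b : blocksB γ v' := by
    rw [hv'def, blocksB_map_iff (· + β.sum) v (fun a _ b _ => by simp)]
    exact hvb
  have hcross : ∀ x ∈ u, ∀ y ∈ v', x < y := by
    intro x hx y hy
    have := humem x hx
    have := hv'mem y hy
    omega
  have hperm : (itl β γ u v').Perm (List.range' 1 α.sum) := by
    refine (itl_perm β γ u v' hlen (by omega) hv'l).trans ?_
    refine (hup.append hv'perm).trans ?_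
    have h := List.range'_append (s := 1) (m := β.sum) (n := γ.sum) (step := 1)
    rw [one_mul] at h
    rw [show α.sum = γ.sum + β.sum by omega,
      show β.sum + 1 = 1 + β.sum from Nat.add_comm _ _]
    rw [Nat.add_comm γ.sum β.sum]
    exact h ▸ List.Perm.refl _
  refine ⟨mem_Lw.2 ⟨hperm, itl_blocks α β γ u v' hm (by omega) hv'l hub hv'b hcross⟩,
    by omega, ?_, ?_⟩
  · exact itl_filter _ β γ u v' hlen (by omega) hv'l
      (fun x hx => by simpa using (humem x hx).2)
      (fun y hy => by simp only [decide_eq_false_iff_not]; have := hv'mem y hy; omega)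
  · have hfil : (itl β γ u v').filter (fun a => decide (β.sum < a)) = v' :=
      itl_filter' _ β γ u v' hlen (by omega) hv'l
        (fun x hx => by simp only [decide_eq_false_iff_not]; have := humem x hx; omega)
        (fun y hy => by simp only [decide_eq_true_eq]; have := hv'mem y hy; omega)
    rw [hfil]
    rw [stdz_of_perm_range' (k := β.sum) hv'perm]
    rw [hv'def, List.map_map]
    conv_rhs => rw [← List.map_id v]
    apply List.map_congr_left
    intro a ha
    simp
-- ### part 2 assembly pieces

lemma decide_not_le (i : ℕ) : (fun b => decide (i < b)) = (fun b : ℕ => ! decide (b ≤ i)) := by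
  funext b
  by_cases h : b ≤ i
  · simp [h, Nat.not_lt.mpr h]
  · simp [h, Nat.lt_of_not_le h]

lemma stdz_filter_recover {w : List ℕ} {n i : ℕ} (hw : w.Perm (List.range' 1 n)) :
    (stdz (w.filter (fun a => i < a))).map (· + i) = w.filter (fun a => i < a) := by
  have hperm : (w.filter (fun a => decide (i < a))).Perm (List.range' (i+1) (n - i)) := by
    have h1 := hw.filter (fun a => decide (i < a))
    rw [filter_gt_range'] at h1
    have h2 : max 1 (i+1) = i + 1 := by omega
    rw [h2] at h1
    have h3 : 1 + n - (i+1) = n - i := by omega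
    rwa [h3] at h1
  rw [stdz_of_perm_range' (k := i) hperm, List.map_map]
  conv_rhs => rw [← List.map_id (w.filter (fun a => decide (i < a)))]
  apply List.map_congr_left
  intro a ha
  rw [List.mem_filter] at ha
  have : i < a := by simpa using ha.2
  show a - i + i = a
  omega

lemma cntL_sum_eq {α w : List ℕ} {i : ℕ} (hw : w.Perm (List.range' 1 α.sum))
    (hi : i ≤ α.sum) : (cnt (fun b => b ≤ i) α w).sum = i := by
  have hn : w.length = α.sum := by rw [hw.length_eq, List.length_range']
  rw [cnt_sum _ _ _ hn, hw.countP_eq, List.countP_eq_length_filter, filter_le_range',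
    List.length_range']
  omega

lemma toFinset_listRange (n : ℕ) : (List.range n).toFinset = Finset.range n := by
  ext x
  simp

lemma card_bij_main (α : List ℕ) (q : List ℕ × List ℕ) :
    (((Lw α).toFinset ×ˢ Finset.range (α.sum+1)).filter
      (fun x => (x.1.filter (fun a => a ≤ x.2), stdz (x.1.filter (fun a => x.2 < a))) = q)).card
    = ((splittings α).toFinset.filter (fun p => q.1 ∈ Lw p.1 ∧ q.2 ∈ Lw p.2)).card := by
  apply Finset.card_bij'
    (i := fun x _ => (cnt (fun b => b ≤ x.2) α x.1, cnt (fun b => x.2 < b) α x.1))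
    (j := fun p _ => (itl p.1 p.2 q.1 (q.2.map (· + p.1.sum)), p.1.sum))
  · -- forward maps into target
    intro x hx
    rw [Finset.mem_filter, Finset.mem_product, List.mem_toFinset, Finset.mem_range] at hx
    obtain ⟨⟨hw, hir⟩, hPq⟩ := hx
    rcases mem_Lw.1 hw with ⟨hperm, hblocks⟩
    have hF := F_side (i := x.2) hperm hblocks (by omega)
    rw [Finset.mem_filter, List.mem_toFinset]
    refine ⟨hF.1, ?_, ?_⟩
    · rw [← show (x.1.filter (fun a => a ≤ x.2)) = q.1 from congrArg Prod.fst hPq]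
      exact hF.2.1
    · rw [← show (stdz (x.1.filter (fun a => x.2 < a))) = q.2 from congrArg Prod.snd hPq]
      exact hF.2.2
  · -- backward maps into source
    intro p hp
    rw [Finset.mem_filter, List.mem_toFinset] at hp
    obtain ⟨hps, hq1, hq2⟩ := hp
    have hsp : (p.1, p.2) ∈ splittings α := by simpa using hps
    have hG := G_side hsp hq1 hq2
    rw [Finset.mem_filter, Finset.mem_product, List.mem_toFinset, Finset.mem_range]
    refine ⟨⟨hG.1, by omega⟩, ?_⟩
    rw [Prod.ext_iff]
    exact ⟨hG.2.2.1, hG.2.2.2⟩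
  · -- left inverse
    intro x hx
    rw [Finset.mem_filter, Finset.mem_product, List.mem_toFinset, Finset.mem_range] at hx
    obtain ⟨⟨hw, hir⟩, hPq⟩ := hx
    rcases mem_Lw.1 hw with ⟨hperm, hblocks⟩
    have hn : x.1.length = α.sum := by rw [hperm.length_eq, List.length_range']
    have hsum : (cnt (fun b => b ≤ x.2) α x.1).sum = x.2 := cntL_sum_eq hperm (by omega)
    have hq1 : q.1 = x.1.filter (fun a => a ≤ x.2) := (congrArg Prod.fst hPq).symm
    have hq2 : q.2 = stdz (x.1.filter (fun a => x.2 < a)) := (congrArg Prod.snd hPq).symm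
    have hrec : (q.2.map (· + x.2)) = x.1.filter (fun a => x.2 < a) := by
      rw [hq2]
      exact stdz_filter_recover hperm
    rw [Prod.ext_iff]
    constructor
    · show itl _ _ _ _ = x.1
      rw [hsum, hq1, hrec]
      rw [decide_not_le x.2]
      exact itl_cnt _ (fun a b hab hb => by
        simp only [decide_eq_true_eq] at hb ⊢; omega) α x.1 hblocks hn
    · show (cnt (fun b => b ≤ x.2) α x.1).sum = x.2
      exact hsum
  · -- right inverse
    intro p hp
    rw [Finset.mem_filter, List.mem_toFinset] at hp
    obtain ⟨hps, hq1, hq2⟩ := hp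
    have hsp : (p.1, p.2) ∈ splittings α := by simpa using hps
    rcases mem_Lw.1 hq1 with ⟨hq1p, _⟩
    rcases mem_Lw.1 hq2 with ⟨hq2p, _⟩
    have hul : q.1.length = p.1.sum := by rw [hq1p.length_eq, List.length_range']
    have hvl : (q.2.map (· + p.1.sum)).length = p.2.sum := by
      rw [List.length_map, hq2p.length_eq, List.length_range']
    have hpu : ∀ x ∈ q.1, (fun b => decide (b ≤ p.1.sum)) x = true := by
      intro x hx
      have := hq1p.mem_iff.1 hx
      rw [List.mem_range'_1] at this
      simp only [decide_eq_true_eq]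
      omega
    have hpv : ∀ y ∈ q.2.map (· + p.1.sum), (fun b => decide (b ≤ p.1.sum)) y = false := by
      intro y hy
      rw [List.mem_map] at hy
      obtain ⟨z, hz, rfl⟩ := hy
      have := hq2p.mem_iff.1 hz
      rw [List.mem_range'_1] at this
      simp only [decide_eq_false_iff_not, Nat.not_le]
      show p.1.sum < z + p.1.sum
      omega
    have hci := cnt_itl (fun b => decide (b ≤ p.1.sum)) α p.1 p.2 q.1
      (q.2.map (· + p.1.sum)) hsp hul hvl hpu hpv
    rw [Prod.ext_iff]
    constructor
    · show cnt (fun b => b ≤ p.1.sum) α _ = p.1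
      exact hci.1
    · show cnt (fun b => p.1.sum < b) α _ = p.2
      rw [decide_not_le p.1.sum]
      exact hci.2
-- ### Φ computations

lemma listsum_tmul (l : List (List ℕ)) (g : List ℕ → MPR) (y : MPR) :
    (((l.map g).sum : MPR) ⊗ₜ[ℤ] y) = (l.map (fun x => g x ⊗ₜ[ℤ] y)).sum := by
  induction l with
  | nil => simp
  | cons a l ih => simp [TensorProduct.add_tmul, ih]

lemma tmul_listsum (x : MPR) (l : List (List ℕ)) (g : List ℕ → MPR) :
    (x ⊗ₜ[ℤ] ((l.map g).sum : MPR)) = (l.map (fun v => x ⊗ₜ[ℤ] g v)).sum := by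
  induction l with
  | nil => simp
  | cons a l ih => simp [TensorProduct.tmul_add, ih]

lemma Phi_comulMPR' (w : List ℕ) :
    finsuppTensorFinsupp' ℤ (List ℕ) (List ℕ) (comulMPR' w)
    = ((List.range (w.length+1)).map (fun i =>
        Finsupp.single (w.filter (fun a => a ≤ i), stdz (w.filter (fun a => i < a))) (1:ℤ))).sum := by
  rw [comulMPR', map_list_sum, List.map_map]
  congr 1
  apply List.map_congr_left
  intro i _
  simp only [Function.comp_apply]
  rw [finsuppTensorFinsupp'_single_tmul_single, one_mul]

lemma Phi_SImg'_tmul (β γ : List ℕ) :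
    finsuppTensorFinsupp' ℤ (List ℕ) (List ℕ) (SImg' β ⊗ₜ[ℤ] SImg' γ)
    = ((Lw β).map (fun u => ((Lw γ).map (fun v =>
        Finsupp.single ((u, v) : List ℕ × List ℕ) (1:ℤ))).sum)).sum := by
  rw [SImg', SImg', listsum_tmul, map_list_sum, List.map_map]
  congr 1
  apply List.map_congr_left
  intro u _
  simp only [Function.comp_apply]
  rw [tmul_listsum, map_list_sum, List.map_map]
  congr 1
  apply List.map_congr_left
  intro v _
  simp only [Function.comp_apply]
  rw [finsuppTensorFinsupp'_single_tmul_single, one_mul]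

lemma RHS_coeff (β γ : List ℕ) (q : List ℕ × List ℕ) :
    (((Lw β).map (fun u => ((Lw γ).map (fun v =>
        Finsupp.single ((u, v) : List ℕ × List ℕ) (1:ℤ))).sum)).sum) q
    = if (q.1 ∈ Lw β ∧ q.2 ∈ Lw γ) then 1 else 0 := by
  rw [listsum_apply2, List.map_map]
  have inner : ∀ u : List ℕ, (((Lw γ).map (fun v =>
      Finsupp.single ((u, v) : List ℕ × List ℕ) (1:ℤ))).sum) q
      = if u = q.1 ∧ q.2 ∈ Lw γ then 1 else 0 := by
    intro u
    rw [listsum_apply2, List.map_map]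
    have hmc : ((Lw γ).map ((fun f : (List ℕ × List ℕ) →₀ ℤ => f q) ∘
        (fun v => Finsupp.single ((u, v) : List ℕ × List ℕ) (1:ℤ))))
        = ((Lw γ).map (fun v => if v = q.2 then (if u = q.1 then (1:ℤ) else 0) else 0)) := by
      apply List.map_congr_left
      intro v _
      simp only [Function.comp_apply, Finsupp.single_apply]
      by_cases h1 : v = q.2 <;> by_cases h2 : u = q.1 <;>
        simp [h1, h2, Prod.ext_iff]
    rw [hmc, list_sum_ite_eq _ (nodup_Lw γ) _ _]
    by_cases h : q.2 ∈ Lw γ <;> by_cases h2 : u = q.1 <;> simp [h, h2]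
  have hmc2 : ((Lw β).map ((fun f : (List ℕ × List ℕ) →₀ ℤ => f q) ∘
      (fun u => ((Lw γ).map (fun v =>
        Finsupp.single ((u, v) : List ℕ × List ℕ) (1:ℤ))).sum)))
      = ((Lw β).map (fun u => if u = q.1 then
          (if q.2 ∈ Lw γ then (1:ℤ) else 0) else 0)) := by
    apply List.map_congr_left
    intro u _
    simp only [Function.comp_apply]
    rw [inner u]
    by_cases h1 : u = q.1 <;> simp [h1]
  rw [hmc2, list_sum_ite_eq _ (nodup_Lw β) _ _]
  by_cases h1 : q.1 ∈ Lw β <;> by_cases h2 : q.2 ∈ Lw γ <;> simp [h1, h2]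

lemma LHS_coeff (α : List ℕ) (q : List ℕ × List ℕ) :
    (((Lw α).map (fun w =>
        finsuppTensorFinsupp' ℤ (List ℕ) (List ℕ) (comulMPR' w))).sum) q
    = ((((Lw α).toFinset ×ˢ Finset.range (α.sum+1)).filter
      (fun x => (x.1.filter (fun a => a ≤ x.2),
        stdz (x.1.filter (fun a => x.2 < a))) = q)).card : ℤ) := by
  rw [listsum_apply2, List.map_map]
  have hmc : ((Lw α).map ((fun f : (List ℕ × List ℕ) →₀ ℤ => f q) ∘
      (fun w => finsuppTensorFinsupp' ℤ (List ℕ) (List ℕ) (comulMPR' w))))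
      = ((Lw α).map (fun w => ∑ i ∈ Finset.range (α.sum+1),
          (if (w.filter (fun a => a ≤ i), stdz (w.filter (fun a => i < a))) = q
            then (1:ℤ) else 0))) := by
    apply List.map_congr_left
    intro w hw
    simp only [Function.comp_apply]
    rw [Phi_comulMPR', length_of_mem_Lw hw, listsum_apply2, List.map_map]
    rw [← toFinset_listRange, List.sum_toFinset _ (List.nodup_range)]
    congr 1
    apply List.map_congr_left
    intro i _
    simp only [Function.comp_apply, Finsupp.single_apply]
  rw [hmc, ← List.sum_toFinset _ (nodup_Lw α), ← Finset.sum_product']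
  rw [Finset.sum_boole]
lemma part2 (α : List ℕ) :
    comulE (SImg α) = ((splittings α).map (fun p => SImg p.1 ⊗ₜ[ℤ] SImg p.2)).sum := by
  rw [SImg_eq_SImg']
  have hR : (splittings α).map (fun p => SImg p.1 ⊗ₜ[ℤ] SImg p.2)
      = (splittings α).map (fun p => SImg' p.1 ⊗ₜ[ℤ] SImg' p.2) :=
    List.map_congr_left fun p _ => by rw [SImg_eq_SImg', SImg_eq_SImg']
  rw [hR]
  have hL : comulE (SImg' α) = ((Lw α).map comulMPR').sum := by
    rw [SImg', map_list_sum comulE, List.map_map]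
    congr 1
    apply List.map_congr_left
    intro w _
    simp only [Function.comp_apply]
    rw [comulE, Finsupp.lsum_single, LinearMap.toSpanSingleton_apply, one_smul]
  rw [hL]
  apply (finsuppTensorFinsupp' ℤ (List ℕ) (List ℕ)).injective
  rw [map_list_sum, map_list_sum, List.map_map, List.map_map]
  apply Finsupp.ext
  intro q
  have hmcR : ((splittings α).map ((⇑(finsuppTensorFinsupp' ℤ (List ℕ) (List ℕ))) ∘
      (fun p => SImg' p.1 ⊗ₜ[ℤ] SImg' p.2)))
      = ((splittings α).map (fun p => ((Lw p.1).map (fun u => ((Lw p.2).map (fun v =>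
          Finsupp.single ((u, v) : List ℕ × List ℕ) (1:ℤ))).sum)).sum)) := by
    apply List.map_congr_left
    intro p _
    simp only [Function.comp_apply]
    rw [Phi_SImg'_tmul]
  have hLHS : ((Lw α).map ((⇑(finsuppTensorFinsupp' ℤ (List ℕ) (List ℕ))) ∘ comulMPR'))
      = ((Lw α).map (fun w =>
        finsuppTensorFinsupp' ℤ (List ℕ) (List ℕ) (comulMPR' w))) := rfl
  rw [hLHS, hmcR, LHS_coeff α q, listsum_apply2, List.map_map]
  have hmcR2 : ((splittings α).map ((fun f : (List ℕ × List ℕ) →₀ ℤ => f q) ∘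
      (fun p => ((Lw p.1).map (fun u => ((Lw p.2).map (fun v =>
          Finsupp.single ((u, v) : List ℕ × List ℕ) (1:ℤ))).sum)).sum)))
      = ((splittings α).map (fun p => if (q.1 ∈ Lw p.1 ∧ q.2 ∈ Lw p.2)
          then (1:ℤ) else 0)) := by
    apply List.map_congr_left
    intro p _
    simp only [Function.comp_apply]
    rw [RHS_coeff]
  rw [hmcR2, ← List.sum_toFinset _ (nodup_splittings α), Finset.sum_boole, card_bij_main]
-- ### part 3: wA and the triangularity key lemma

def wA : List ℕ → List ℕ
  | [] => []
  | a :: α => List.range' (α.sum + 1) a ++ wA α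

lemma wA_length (α : List ℕ) : (wA α).length = α.sum := by
  induction α with
  | nil => rfl
  | cons a α ih => simp [wA, ih]

lemma wA_perm (α : List ℕ) : (wA α).Perm (List.range' 1 α.sum) := by
  induction α with
  | nil => rfl
  | cons a α ih =>
      rw [wA, List.sum_cons]
      refine (ih.append_left _).trans ?_
      refine (List.perm_append_comm).trans ?_
      have h := List.range'_append (s := 1) (m := α.sum) (n := a) (step := 1)
      rw [one_mul] at h
      rw [show α.sum + 1 = 1 + α.sum from Nat.add_comm _ _]
      rw [Nat.add_comm a α.sum]
      exact h ▸ List.Perm.refl _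

lemma wA_blocks (α : List ℕ) : blocksB α (wA α) := by
  induction α with
  | nil => trivial
  | cons a α ih =>
      rw [wA, blocksB_cons, List.take_left' (List.length_range'),
        List.drop_left' (List.length_range')]
      exact ⟨List.pairwise_lt_range', ih⟩

lemma pos_sum_nil {l : List ℕ} (hpos : ∀ a ∈ l, 0 < a) (h : l.sum = 0) : l = [] := by
  cases l with
  | nil => rfl
  | cons a l =>
      have := hpos a (List.mem_cons_self)
      simp [List.sum_cons] at h
      omega

lemma key3 : ∀ (α' : List ℕ) (run α : List ℕ), run.Pairwise (· < ·) → 0 < run.length →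
    (∀ x ∈ run, α.sum < x) → (∀ a ∈ α, 0 < a) → (∀ a ∈ α', 0 < a) →
    α'.sum = run.length + α.sum → blocksB α' (run ++ wA α) →
    α.length + 1 ≤ α'.length ∧ (α'.length = α.length + 1 → α' = run.length :: α)
  | [], run, α, _, hlen, _, _, _, hsum, _ => by
      simp at hsum
      omega
  | a' :: α'', run, α, hsort, hlen, hgt, hα, hα', hsum, hb => by
      obtain ⟨hs, hb'⟩ := (blocksB_cons _ _ _).1 hb
      have ha' : 0 < a' := hα' a' (List.mem_cons_self)
      simp only [List.sum_cons] at hsum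
      by_cases hcase : a' < run.length
      · have hdrop : (run ++ wA α).drop a' = run.drop a' ++ wA α :=
          List.drop_append_of_le_length (by omega)
        rw [hdrop] at hb'
        have hrec := key3 α'' (run.drop a') α
          (List.Pairwise.sublist (List.drop_sublist _ _) hsort)
          (by rw [List.length_drop]; omega)
          (fun x hx => hgt x ((List.drop_sublist _ _).mem hx)) hα
          (fun a ha => hα' a (List.mem_cons_of_mem _ ha))
          (by rw [List.length_drop]; omega) hb'
        constructor
        · simp only [List.length_cons]
          omega
        · intro h
          simp only [List.length_cons] at h
          omega
      · by_cases hcase2 : a' = run.length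
        · have hdrop : (run ++ wA α).drop a' = wA α := by
            rw [hcase2]
            exact List.drop_left' rfl
          rw [hdrop] at hb'
          cases α with
          | nil =>
              have h0 : α'' = [] := pos_sum_nil
                (fun a ha => hα' a (List.mem_cons_of_mem _ ha)) (by simp at hsum; omega)
              subst h0
              simp only [List.length_cons, List.length_nil]
              exact ⟨le_refl _, fun _ => by rw [hcase2]⟩
          | cons b αr =>
              rw [wA] at hb'
              have hrec := key3 α'' (List.range' (αr.sum + 1) b) αr
                (List.pairwise_lt_range')
                (by rw [List.length_range']; exact hα b (List.mem_cons_self))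
                (fun x hx => by
                  rw [List.mem_range'_1] at hx
                  omega)
                (fun a ha => hα a (List.mem_cons_of_mem _ ha))
                (fun a ha => hα' a (List.mem_cons_of_mem _ ha))
                (by rw [List.length_range']; simp only [List.sum_cons] at hsum ⊢; omega)
                hb'
              constructor
              · simp only [List.length_cons]
                omega
              · intro h
                simp only [List.length_cons] at h ⊢
                have h2 := hrec.2 (by omega)
                rw [List.length_range'] at h2
                rw [h2, hcase2]
        · -- a' > run.length : contradiction
          exfalso
          have hta : run.length < a' := by omega
          cases α with
          | nil =>
              simp at hsum
              omega
          | cons b αr =>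
              have hbpos : 0 < b := hα b (List.mem_cons_self)
              have htake : (run ++ wA (b :: αr)).take a'
                  = run ++ (wA (b :: αr)).take (a' - run.length) := by
                rw [List.take_append,
                  List.take_of_length_le (by omega)]
              have hcons : wA (b :: αr) = (αr.sum + 1) ::
                  (List.range' (αr.sum + 1 + 1) (b - 1) ++ wA αr) := by
                rw [wA, show b = (b - 1) + 1 by omega, List.range'_succ]
                simp
              have htc : (wA (b :: αr)).take (a' - run.length)
                  = (αr.sum + 1) :: ((List.range' (αr.sum + 1 + 1) (b - 1) ++ wA αr).take
                      (a' - run.length - 1)) := by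
                rw [hcons, show a' - run.length = (a' - run.length - 1) + 1 by omega,
                  List.take_succ_cons]
                congr 1
              rw [htake, htc] at hs
              rcases List.pairwise_append.1 hs with ⟨-, -, hcross⟩
              obtain ⟨x, hx⟩ := List.exists_mem_of_length_pos hlen
              have h1 := hcross x hx (αr.sum + 1) (List.mem_cons_self)
              have h2 := hgt x hx
              rw [List.sum_cons] at h2
              omega
-- ### part 3 final

lemma part3 : Function.Injective (fun x : {w : List ℕ // ∀ a ∈ w, 0 < a} →₀ ℤ =>
    x.sum fun α c => c • SImg α.val) := by
  have hker : ∀ z : {w : List ℕ // ∀ a ∈ w, 0 < a} →₀ ℤ,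
      (z.sum fun α c => c • SImg α.val) = 0 → z = 0 := by
    intro z hz
    by_contra hne
    obtain ⟨α1, hα1⟩ := Finsupp.support_nonempty_iff.2 hne
    set T := z.support.filter (fun α => α.val.sum = α1.val.sum) with hT
    obtain ⟨α0, hα0, hmax⟩ := T.exists_max_image (fun α => α.val.length)
      ⟨α1, by rw [hT, Finset.mem_filter]; exact ⟨hα1, rfl⟩⟩
    rw [hT, Finset.mem_filter] at hα0
    obtain ⟨hα0s, hα0sum⟩ := hα0
    have hmem0 : wA α0.val ∈ Lw α0.val := mem_Lw.2 ⟨wA_perm _, wA_blocks _⟩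
    have hterm0 : (z α0 • SImg α0.val) (wA α0.val) = z α0 := by
      rw [SImg_eq_SImg', Finsupp.smul_apply, SImg'_apply, if_pos hmem0]
      simp
    have hterm : ∀ β ∈ z.support, β ≠ α0 → (z β • SImg β.val) (wA α0.val) = 0 := by
      intro β hβ hne'
      rw [SImg_eq_SImg', Finsupp.smul_apply, SImg'_apply, if_neg ?_]
      · simp
      intro hmem
      rcases mem_Lw.1 hmem with ⟨hperm, hblocks⟩
      have hlen : (wA α0.val).length = β.val.sum := by
        rw [hperm.length_eq, List.length_range']
      have hlen0 : (wA α0.val).length = α0.val.sum := wA_length _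
      have hsums : β.val.sum = α0.val.sum := by omega
      rcases hc : α0.val with _ | ⟨a, αr⟩
      · have hβnil : β.val = [] := pos_sum_nil β.prop (by rw [hsums, hc]; rfl)
        exact hne' (Subtype.ext (by rw [hβnil, hc]))
      · rw [hc, wA] at hblocks
        have hapos : 0 < a := α0.prop a (by rw [hc]; exact List.mem_cons_self)
        have hk := key3 β.val (List.range' (αr.sum + 1) a) αr
          (List.pairwise_lt_range')
          (by rw [List.length_range']; exact hapos)
          (fun x hx => by rw [List.mem_range'_1] at hx; omega)
          (fun x hx => α0.prop x (by rw [hc]; exact List.mem_cons_of_mem _ hx))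
          β.prop
          (by rw [List.length_range', hsums, hc, List.sum_cons])
          hblocks
        have hmaxβ : β.val.length ≤ α0.val.length := hmax β (by
          rw [hT, Finset.mem_filter]
          exact ⟨hβ, by rw [hsums, hα0sum]⟩)
        rw [hc, List.length_cons] at hmaxβ
        have hk1 := hk.1
        have hk2 := hk.2 (by omega)
        rw [List.length_range'] at hk2
        exact hne' (Subtype.ext (by rw [hk2, hc]))
    have heval : (z.sum fun α c => c • SImg α.val) (wA α0.val) = z α0 := by
      rw [Finsupp.sum, Finsupp.finset_sum_apply, Finset.sum_eq_single_of_mem α0 hα0s hterm, hterm0]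
    rw [hz] at heval
    simp only [Finsupp.coe_zero, Pi.zero_apply] at heval
    exact (Finsupp.mem_support_iff.1 hα0s) heval.symm
  intro x y hxy
  have h := hker (x - y) ?_
  · exact sub_eq_zero.1 h
  · rw [Finsupp.sum_sub_index (fun a b₁ b₂ => sub_smul b₁ b₂ _)]
    simp only at hxy
    rw [hxy, sub_self]


/-- The map `i : NSymm → (MPR, m', μ')` with `Sₙ ↦ [1,2,…,n]` is an injective morphism
of Hopf algebras: it is multiplicative on monomials `S_α`, it intertwines the
comultiplications (`μ(S_α) = Σ_{β+γ=α} S_β ⊗ S_γ`), and its linear extension on the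
basis of compositions (words with positive entries) is injective. -/
theorem stmt10 :
    (∀ α β : List ℕ, SImg (α ++ β) = mulE (SImg α) (SImg β)) ∧
    (∀ α : List ℕ, comulE (SImg α)
        = ((splittings α).map (fun p => SImg p.1 ⊗ₜ[ℤ] SImg p.2)).sum) ∧
    Function.Injective (fun x : {w : List ℕ // ∀ a ∈ w, 0 < a} →₀ ℤ =>
      x.sum fun α c => c • SImg α.val) := ⟨part1, part2, part3⟩
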